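/- Let E be a real Banach space and f : E → ℝ a convex continuous function. Define the Fenchel conjugate f* : E* → ℝ ∪ {+∞} by f*(x*) = sup_{x∈E} (x*(x) − f(x)), and let D = {x* ∈ E* : f*(x*) < +∞} be its domain. If the weak* closure of D is a weak* compact and weak* metrizable subset of E*, then there exists a dense Gδ subset G of E such that f is Gâteaux differentiable at every point of G. -/

import Mathlib

open Filter Topology Set


section OneDim

variable {g : ℝ → ℝ}

/-- Lower right Dini/derivative of a convex function. -/
noncomputable def rderiv (g : ℝ → ℝ) (t : ℝ) : ℝ := sInf (slope g t '' Set.Ioi t)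

lemma slope_mono' (hg : ConvexOn ℝ Set.univ g) {t a b : ℝ} (ha : a ≠ t) (hb : b ≠ t)
    (hab : a ≤ b) : slope g t a ≤ slope g t b :=
  hg.slope_mono (Set.mem_univ t) ⟨Set.mem_univ a, ha⟩ ⟨Set.mem_univ b, hb⟩ hab

lemma bddBelow_slope (hg : ConvexOn ℝ Set.univ g) (t : ℝ) :
    BddBelow (slope g t '' Set.Ioi t) := by
  refine ⟨slope g t (t - 1), ?_⟩
  rintro y ⟨s, hs, rfl⟩
  exact slope_mono' hg (by linarith) (ne_of_gt hs) (by linarith [Set.mem_Ioi.mp hs])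

lemma rderiv_le (hg : ConvexOn ℝ Set.univ g) {t s : ℝ} (h : t < s) :
    rderiv g t ≤ slope g t s :=
  csInf_le (bddBelow_slope hg t) ⟨s, h, rfl⟩

lemma le_rderiv (hg : ConvexOn ℝ Set.univ g) {t c : ℝ} (h : ∀ s, t < s → c ≤ slope g t s) :
    c ≤ rderiv g t := by
  refine le_csInf ⟨slope g t (t + 1), ⟨t + 1, by simp, rfl⟩⟩ ?_
  rintro y ⟨s, hs, rfl⟩
  exact h s hs

lemma slope_le_rderiv (hg : ConvexOn ℝ Set.univ g) {a t : ℝ} (h : a < t) :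
    slope g a t ≤ rderiv g t := by
  refine le_rderiv hg fun s hs => ?_
  rw [slope_comm]
  exact slope_mono' hg (ne_of_lt h) (ne_of_gt hs) (le_of_lt (h.trans hs))

lemma rderiv_mono (hg : ConvexOn ℝ Set.univ g) : Monotone (rderiv g) := by
  intro t t' h
  rcases eq_or_lt_of_le h with rfl | h
  · exact le_refl _
  · exact le_trans (rderiv_le hg h) (slope_le_rderiv hg h)

lemma quad_est (hg : ConvexOn ℝ Set.univ g) (t : ℝ) {δ : ℝ} (hδ : 0 < δ) :
    g (t + δ) + g (t - δ) - 2 * g t ≤ δ * (rderiv g (t + δ) - rderiv g (t - δ)) := by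
  have h1 : slope g t (t + δ) ≤ rderiv g (t + δ) := slope_le_rderiv hg (by linarith)
  have h2 : rderiv g (t - δ) ≤ slope g (t - δ) t := rderiv_le hg (by linarith)
  have e1 : slope g t (t + δ) = (g (t + δ) - g t) / δ := by
    rw [slope_def_field]; congr 1; ring
  have e2 : slope g (t - δ) t = (g t - g (t - δ)) / δ := by
    rw [slope_def_field]; congr 1; ring
  rw [e1] at h1; rw [e2] at h2
  have h1' : g (t + δ) - g t ≤ δ * rderiv g (t + δ) := by
    rw [div_le_iff₀ hδ] at h1; linarith [h1]
  have h2' : δ * rderiv g (t - δ) ≤ g t - g (t - δ) := by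
    rw [le_div_iff₀ hδ] at h2; linarith [h2]
  nlinarith [h1', h2']

lemma onedim_dense (hg : ConvexOn ℝ Set.univ g) {c : ℝ} (hc : 0 < c) {a b : ℝ} (hab : a < b) :
    ∃ t ∈ Set.Ioo a b, ∃ δ > 0, g (t + δ) + g (t - δ) - 2 * g t < δ * c := by
  have hbad : Set.Countable {u | ¬ContinuousAt (rderiv g) u} :=
    (rderiv_mono hg).countable_not_continuousAt
  have : ¬ (Set.Ioo a b ⊆ {u | ¬ContinuousAt (rderiv g) u}) := by
    intro hsub
    have : (Set.Ioo a b).Countable := hbad.mono hsub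
    have hcard := Cardinal.mk_Ioo_real hab
    rw [← Cardinal.le_aleph0_iff_set_countable] at this
    rw [hcard] at this
    exact absurd this (not_le.mpr Cardinal.aleph0_lt_continuum)
  obtain ⟨t, ht, htc⟩ := Set.not_subset.mp this
  simp only [Set.mem_setOf_eq, not_not] at htc
  refine ⟨t, ht, ?_⟩
  have := Metric.continuousAt_iff.mp htc (c / 4) (by linarith)
  obtain ⟨δ₀, hδ₀, hδ⟩ := this
  refine ⟨δ₀ / 2, by linarith, ?_⟩
  have hp : |rderiv g (t + δ₀ / 2) - rderiv g t| < c / 4 := by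
    have h0 : dist (t + δ₀ / 2) t < δ₀ := by
      rw [Real.dist_eq]; rw [show t + δ₀ / 2 - t = δ₀ / 2 by ring, abs_of_pos] <;> linarith
    simpa [Real.dist_eq] using hδ h0
  have hm : |rderiv g (t - δ₀ / 2) - rderiv g t| < c / 4 := by
    have h0 : dist (t - δ₀ / 2) t < δ₀ := by
      rw [Real.dist_eq]; rw [show t - δ₀ / 2 - t = -(δ₀ / 2) by ring, abs_neg, abs_of_pos] <;> linarith
    simpa [Real.dist_eq] using hδ h0
  have key : rderiv g (t + δ₀ / 2) - rderiv g (t - δ₀ / 2) < c := by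
    rw [abs_lt] at hp hm; linarith
  calc g (t + δ₀ / 2) + g (t - δ₀ / 2) - 2 * g t
      ≤ δ₀ / 2 * (rderiv g (t + δ₀ / 2) - rderiv g (t - δ₀ / 2)) := quad_est hg t (by linarith)
    _ < δ₀ / 2 * c := by
        apply mul_lt_mul_of_pos_left key; linarith

end OneDim
section Espace

variable {E : Type*} [NormedAddCommGroup E] [NormedSpace ℝ E]
variable {f : E → ℝ}

/-- restriction of `f` to a line -/
def lineFn (f : E → ℝ) (x v : E) : ℝ → ℝ := fun t => f (x + t • v)

lemma line_convex (hconv : ConvexOn ℝ Set.univ f) (x v : E) :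
    ConvexOn ℝ Set.univ (lineFn f x v) := by
  have h := hconv.comp_affineMap (AffineMap.lineMap (x : E) (x + v))
  have he : lineFn f x v = f ∘ (AffineMap.lineMap (x : E) (x + v)) := by
    funext t
    simp [lineFn, AffineMap.lineMap_apply, add_sub_cancel_left]
    rw [add_comm]
  rw [he]
  simpa using h

lemma slope_line (x v : E) (t : ℝ) :
    slope (lineFn f x v) 0 t = (f (x + t • v) - f x) / t := by
  simp [slope_def_field, lineFn]

/-- the right directional derivative of `f` at `x` in direction `v` -/
noncomputable def Nf (f : E → ℝ) (x v : E) : ℝ := rderiv (lineFn f x v) 0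

variable (hconv : ConvexOn ℝ Set.univ f)
include hconv

lemma Nf_le {x v : E} {t : ℝ} (ht : 0 < t) : Nf f x v ≤ (f (x + t • v) - f x) / t := by
  rw [← slope_line]
  exact rderiv_le (line_convex hconv x v) ht

lemma le_Nf {x v : E} {c : ℝ} (h : ∀ t, 0 < t → c ≤ (f (x + t • v) - f x) / t) :
    c ≤ Nf f x v := by
  refine le_rderiv (line_convex hconv x v) fun s hs => ?_
  rw [slope_line]
  exact h s hs

lemma Nf_lb {x v : E} : f x - f (x - v) ≤ Nf f x v := by
  have h := slope_le_rderiv (line_convex hconv x v) (show (-1:ℝ) < 0 by norm_num)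
  rw [slope_def_field] at h
  simp only [lineFn, zero_smul, add_zero, neg_one_smul] at h
  rw [show x + -v = x - v by abel, show (0:ℝ) - -1 = 1 by norm_num, div_one] at h
  exact h

lemma Nf_zero_dir (x : E) : Nf f x 0 = 0 := by
  refine le_antisymm ?_ ?_
  · have := Nf_le hconv (x := x) (v := 0) (t := 1) one_pos
    simpa using this
  · refine le_Nf hconv fun t ht => ?_
    simp

lemma Nf_smul {x v : E} {c : ℝ} (hc : 0 < c) : Nf f x (c • v) = c * Nf f x v := by
  have key : ∀ (d : ℝ), 0 < d → ∀ w : E, d * Nf f x w ≤ Nf f x (d • w) := by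
    intro d hd w
    refine le_Nf hconv fun t ht => ?_
    have := Nf_le hconv (x := x) (v := w) (t := d * t) (by positivity)
    rw [show x + (d * t) • w = x + t • d • w by rw [smul_smul, mul_comm]] at this
    rw [le_div_iff₀ ht]
    calc d * Nf f x w * t ≤ d * ((f (x + t • d • w) - f x) / (d * t)) * t := by
          have := mul_le_mul_of_nonneg_left this hd.le
          nlinarith
      _ = f (x + t • d • w) - f x := by field_simp
  refine le_antisymm ?_ (key c hc v)
  have h2 := key c⁻¹ (by positivity) (c • v)
  rw [smul_smul, inv_mul_cancel₀ hc.ne', one_smul] at h2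
  calc Nf f x (c • v) = c * (c⁻¹ * Nf f x (c • v)) := by field_simp
    _ ≤ c * Nf f x v := mul_le_mul_of_nonneg_left h2 hc.le

lemma Nf_add (x v w : E) : Nf f x (v + w) ≤ Nf f x v + Nf f x w := by
  refine le_of_forall_pos_le_add fun ε hε => ?_
  -- find t₁ t₂ witnesses
  have h1 : Nf f x v < Nf f x v + ε / 2 := by linarith
  have h2 : Nf f x w < Nf f x w + ε / 2 := by linarith
  obtain ⟨y1, ⟨t1, ht1, rfl⟩, hy1⟩ := exists_lt_of_csInf_lt
    (⟨slope (lineFn f x v) 0 1, ⟨1, by norm_num, rfl⟩⟩ : (slope (lineFn f x v) 0 '' Set.Ioi 0).Nonempty) h1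
  obtain ⟨y2, ⟨t2, ht2, rfl⟩, hy2⟩ := exists_lt_of_csInf_lt
    (⟨slope (lineFn f x w) 0 1, ⟨1, by norm_num, rfl⟩⟩ : (slope (lineFn f x w) 0 '' Set.Ioi 0).Nonempty) h2
  rw [Set.mem_Ioi] at ht1 ht2
  rw [slope_line] at hy1 hy2
  set s := min t1 t2 with hs
  have hs0 : 0 < s := lt_min ht1 ht2
  -- monotonicity of slopes
  have mono : ∀ (u : E) (a b : ℝ), 0 < a → a ≤ b →
      (f (x + a • u) - f x) / a ≤ (f (x + b • u) - f x) / b := by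
    intro u a b ha hab
    rw [← slope_line, ← slope_line]
    exact slope_mono' (line_convex hconv x u) (ne_of_gt ha) (ne_of_gt (lt_of_lt_of_le ha hab)) hab
  have hq1 : (f (x + s • v) - f x) / s ≤ (f (x + t1 • v) - f x) / t1 :=
    mono v s t1 hs0 (min_le_left _ _)
  have hq2 : (f (x + s • w) - f x) / s ≤ (f (x + t2 • w) - f x) / t2 :=
    mono w s t2 hs0 (min_le_right _ _)
  -- convexity midpoint estimate at s/2
  have hmid : (f (x + (s/2) • (v + w)) - f x) / (s/2) ≤
      (f (x + s • v) - f x) / s + (f (x + s • w) - f x) / s := by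
    have hcvx := hconv.2 (Set.mem_univ (x + s • v)) (Set.mem_univ (x + s • w))
      (by norm_num : (0:ℝ) ≤ 1/2) (by norm_num : (0:ℝ) ≤ 1/2) (by norm_num)
    have heq : (1/2 : ℝ) • (x + s • v) + (1/2 : ℝ) • (x + s • w) = x + (s/2) • (v + w) := by
      rw [smul_add, smul_add, smul_smul, smul_smul, smul_add]
      rw [show (1/2 : ℝ) * s = s/2 by ring]
      have hx : (1/2 : ℝ) • x + (1/2 : ℝ) • x = x := by
        rw [← add_smul]; norm_num
      rw [show (1/2:ℝ) • x + (s/2) • v + ((1/2:ℝ) • x + (s/2) • w)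
        = ((1/2:ℝ) • x + (1/2:ℝ) • x) + ((s/2) • v + (s/2) • w) by abel, hx]
    rw [heq] at hcvx
    simp only [smul_eq_mul] at hcvx
    rw [← add_div, div_le_div_iff₀ (by positivity) hs0]
    nlinarith [mul_le_mul_of_nonneg_right hcvx hs0.le]
  have hN := Nf_le hconv (x := x) (v := v + w) (t := s/2) (by positivity)
  linarith [hN, hmid, hq1, hq2, hy1, hy2]

lemma Nf_pair_nonneg (x v : E) : 0 ≤ Nf f x v + Nf f x (-v) := by
  have := Nf_add hconv x v (-v)
  rw [add_neg_cancel, Nf_zero_dir hconv] at this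
  linarith

end Espace
section Subgrad

variable {E : Type*} [NormedAddCommGroup E] [NormedSpace ℝ E]
variable {f : E → ℝ}
variable (hconv : ConvexOn ℝ Set.univ f) (hcont : Continuous f)
include hconv hcont

/-- any linear functional dominated by `Nf f x` is bounded -/
lemma bound_of_le_Nf (x : E) (g : E →ₗ[ℝ] ℝ) (hg : ∀ w, g w ≤ Nf f x w) :
    ∃ C, ∀ w, ‖g w‖ ≤ C * ‖w‖ := by
  obtain ⟨δ, hδ0, hδ⟩ := Metric.continuousAt_iff.mp (hcont.continuousAt (x := x)) 1 one_pos
  have key : ∀ w : E, ‖w‖ < δ → g w ≤ 1 := by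
    intro w hw
    have h1 : Nf f x w ≤ f (x + w) - f x := by
      have := Nf_le hconv (x := x) (v := w) (t := 1) one_pos
      simpa using this
    have h2 : dist (x + w) x < δ := by
      rw [dist_eq_norm]; simpa using hw
    have := hδ h2
    rw [Real.dist_eq] at this
    have := abs_lt.mp this
    linarith [hg w, h1]
  have habs : ∀ w : E, ‖w‖ < δ → |g w| ≤ 1 := by
    intro w hw
    rw [abs_le]
    constructor
    · have := key (-w) (by simpa using hw)
      simp only [map_neg] at this
      linarith
    · exact key w hw
  refine ⟨2 / δ, fun w => ?_⟩
  rcases eq_or_ne w 0 with rfl | hw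
  · simp
  · have hwn : 0 < ‖w‖ := norm_pos_iff.mpr hw
    have hu : ‖(δ / (2 * ‖w‖)) • w‖ < δ := by
      rw [norm_smul, Real.norm_eq_abs, abs_of_pos (by positivity)]
      rw [div_mul_eq_mul_div, mul_comm]
      rw [div_lt_iff₀ (by positivity)]
      nlinarith
    have := habs _ hu
    rw [map_smul, smul_eq_mul, abs_mul, abs_of_pos (show (0:ℝ) < δ / (2 * ‖w‖) by positivity)] at this
    have h3 : δ * |g w| ≤ 2 * ‖w‖ := by
      rw [div_mul_eq_mul_div, div_le_one (by positivity)] at this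
      linarith
    rw [Real.norm_eq_abs, div_mul_eq_mul_div, le_div_iff₀ hδ0]
    linarith [h3, mul_comm |g w| δ]

/-- Hahn–Banach: a continuous linear functional dominated by `Nf f x` with value `c` at `v`. -/
lemma exists_subgrad (x : E) {v : E} (hv : v ≠ 0) {c : ℝ}
    (h1 : -Nf f x (-v) ≤ c) (h2 : c ≤ Nf f x v) :
    ∃ p : E →L[ℝ] ℝ, p v = c ∧ ∀ w, p w ≤ Nf f x w := by
  set pm := LinearPMap.mkSpanSingleton (K := ℝ) (L := ℝ) (σ := RingHom.id ℝ) v c hv with hpm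
  have hf : ∀ z : pm.domain, pm z ≤ Nf f x (z : E) := by
    rintro ⟨z, hz⟩
    rw [LinearPMap.domain_mkSpanSingleton] at hz
    obtain ⟨a, rfl⟩ := Submodule.mem_span_singleton.mp hz
    have happ : pm ⟨a • v, hz⟩ = a • c := LinearPMap.mkSpanSingleton'_apply v c _ a hz
    rw [happ, smul_eq_mul]
    show a * c ≤ Nf f x (a • v)
    rcases lt_trichotomy a 0 with ha | rfl | ha
    · have he : Nf f x (a • v) = (-a) * Nf f x (-v) := by
        rw [show a • v = (-a) • (-v) by rw [smul_neg, neg_smul, neg_neg],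
          Nf_smul hconv (by linarith)]
      rw [he]
      have hc : -c ≤ Nf f x (-v) := by linarith
      nlinarith
    · rw [zero_smul, Nf_zero_dir hconv, zero_mul]
    · rw [Nf_smul hconv ha]
      nlinarith
  obtain ⟨g, hg1, hg2⟩ := exists_extension_of_le_sublinear pm (Nf f x)
    (fun d hd w => Nf_smul hconv hd) (fun v' w' => Nf_add hconv x v' w') hf
  have hgv : g v = c := by
    have := hg1 ⟨v, by rw [LinearPMap.domain_mkSpanSingleton]; exact Submodule.mem_span_singleton_self v⟩
    rw [LinearPMap.mkSpanSingleton_apply] at this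
    exact this
  obtain ⟨C, hC⟩ := bound_of_le_Nf hconv hcont x g hg2
  refine ⟨g.mkContinuousOfExistsBound ⟨C, hC⟩, ?_, ?_⟩
  · exact hgv
  · exact hg2

/-- a functional dominated by `Nf f x` has finite Fenchel conjugate value. -/
lemma sup_lt_top (x : E) (p : E →L[ℝ] ℝ) (hp : ∀ w, p w ≤ Nf f x w) :
    (⨆ y : E, ((p y - f y : ℝ) : EReal)) < ⊤ := by
  have key : ∀ y : E, p y - f y ≤ p x - f x := by
    intro y
    have h1 : p (y - x) ≤ Nf f x (y - x) := hp _
    have h2 : Nf f x (y - x) ≤ f y - f x := by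
      have := Nf_le hconv (x := x) (v := y - x) (t := 1) one_pos
      simpa using this
    have := h1.trans h2
    rw [map_sub] at this
    linarith
  refine lt_of_le_of_lt (iSup_le fun y => ?_) (EReal.coe_lt_top (p x - f x))
  exact_mod_cast key y

end Subgrad
/-- Let `E` be a real Banach space and `f : E → ℝ` convex continuous. If the weak* closure of
the domain `D = {x* : f*(x*) < +∞}` of the Fenchel conjugate `f*` is weak* compact and weak*
metrizable, then `f` is Gâteaux differentiable at every point of a dense `Gδ` subset of `E`. -/
theorem stmt_6 {E : Type*} [NormedAddCommGroup E] [NormedSpace ℝ E] [CompleteSpace E]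
    (f : E → ℝ) (hconv : ConvexOn ℝ Set.univ f) (hcont : Continuous f)
    (D : Set (WeakDual ℝ E))
    (hD : D = {p : WeakDual ℝ E | (⨆ x : E, ((p x - f x : ℝ) : EReal)) < ⊤})
    (hcomp : IsCompact (closure D))
    (hmetr : TopologicalSpace.MetrizableSpace (closure D)) :
    ∃ G : Set E, Dense G ∧ IsGδ G ∧ ∀ x ∈ G, ∃ p : E →L[ℝ] ℝ, ∀ v : E,
      Tendsto (fun t : ℝ => (f (x + t • v) - f x) / t) (𝓝[≠] 0) (𝓝 (p v)) := by
  classical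
  set K := closure D with hK
  haveI hcs : CompactSpace ↥K := isCompact_iff_compactSpace.mp hcomp
  haveI := hmetr
  letI : MetricSpace ↥K := TopologicalSpace.metrizableSpaceMetric ↥K
  haveI : SecondCountableTopology ↥K := inferInstance
  haveI : SecondCountableTopology (↥K × ↥K) := inferInstance
  -- countable separating family
  let s : E → Set (↥K × ↥K) := fun v =>
    {pq | (pq.1 : WeakDual ℝ E) v ≠ (pq.2 : WeakDual ℝ E) v}
  have hso : ∀ v, IsOpen (s v) := fun v =>
    isOpen_ne_fun (((WeakDual.eval_continuous v).comp continuous_subtype_val).comp continuous_fst)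
      (((WeakDual.eval_continuous v).comp continuous_subtype_val).comp continuous_snd)
  obtain ⟨T, hTc, hT⟩ := TopologicalSpace.isOpen_iUnion_countable s hso
  have hsep : ∀ p q : WeakDual ℝ E, p ∈ K → q ∈ K → (∀ w ∈ T, p w = q w) → p = q := by
    intro p q hp hq hagree
    by_contra hne
    have hv : ∃ v : E, p v ≠ q v := by
      by_contra hall
      push_neg at hall
      exact hne (DFunLike.ext p q hall)
    obtain ⟨v, hv⟩ := hv
    have hmem : (⟨⟨p, hp⟩, ⟨q, hq⟩⟩ : ↥K × ↥K) ∈ ⋃ u, s u := Set.mem_iUnion.mpr ⟨v, hv⟩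
    rw [← hT] at hmem
    obtain ⟨w, hwT, hw⟩ := Set.mem_iUnion₂.mp hmem
    exact hw (hagree w hwT)
  haveI : Countable ↥T := hTc.to_subtype
  -- the open dense sets
  let U : E → ℝ → Set E := fun v c =>
    {x | ∃ δ, 0 < δ ∧ f (x + δ • v) + f (x - δ • v) - 2 * f x < δ * c}
  have hUopen : ∀ v c, IsOpen (U v c) := by
    intro v c
    have : U v c = ⋃ δ : ℝ, {x | 0 < δ ∧ f (x + δ • v) + f (x - δ • v) - 2 * f x < δ * c} := by
      ext x
      simp only [U, Set.mem_setOf_eq, Set.mem_iUnion]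
    rw [this]
    refine isOpen_iUnion fun δ => ?_
    by_cases hδ : 0 < δ
    · simp only [hδ, true_and]
      have c1 : Continuous fun x : E => f (x + δ • v) := hcont.comp (continuous_id.add continuous_const)
      have c2 : Continuous fun x : E => f (x - δ • v) := hcont.comp (continuous_id.sub continuous_const)
      exact isOpen_lt (((c1.add c2).sub (continuous_const.mul hcont))) (continuous_const.mul continuous_const)
    · have : {x : E | 0 < δ ∧ f (x + δ • v) + f (x - δ • v) - 2 * f x < δ * c} = ∅ := by
        ext x; simp [hδ]
      rw [this]; exact isOpen_empty
  have hUdense : ∀ (v : E) (c : ℝ), 0 < c → Dense (U v c) := by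
    intro v c hc
    rw [Metric.dense_iff]
    intro x₀ r hr
    have hr' : 0 < r / (‖v‖ + 1) := by positivity
    obtain ⟨t, ht, δ, hδ, hlt⟩ := onedim_dense (line_convex hconv x₀ v) hc
      (show -(r / (‖v‖ + 1)) < r / (‖v‖ + 1) by linarith)
    refine ⟨x₀ + t • v, ?_, ?_⟩
    · rw [Metric.mem_ball, dist_eq_norm]
      have : ‖x₀ + t • v - x₀‖ = |t| * ‖v‖ := by
        rw [show x₀ + t • v - x₀ = t • v by abel, norm_smul, Real.norm_eq_abs]
      rw [this]
      have habs : |t| < r / (‖v‖ + 1) := by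
        rw [abs_lt]; exact ⟨ht.1, ht.2⟩
      have h1 : |t| * ‖v‖ ≤ |t| * (‖v‖ + 1) := by nlinarith [abs_nonneg t, norm_nonneg v]
      have h2 : |t| * (‖v‖ + 1) < r / (‖v‖ + 1) * (‖v‖ + 1) := by
        apply mul_lt_mul_of_pos_right habs
        positivity
      have h3 : r / (‖v‖ + 1) * (‖v‖ + 1) = r := by field_simp
      linarith
    · refine ⟨δ, hδ, ?_⟩
      have e1 : x₀ + t • v + δ • v = x₀ + (t + δ) • v := by rw [add_smul]; abel
      have e2 : x₀ + t • v - δ • v = x₀ + (t - δ) • v := by rw [sub_smul]; abel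
      rw [e1, e2]
      exact hlt
  refine ⟨⋂ i : ↥T × ℕ, U (i.1 : E) (1 / ((i.2 : ℝ) + 1)), ?_, ?_, ?_⟩
  · exact dense_iInter_of_isOpen (fun i => hUopen _ _)
      (fun i => hUdense _ _ (by positivity))
  · exact IsGδ.iInter_of_isOpen fun i => (hUopen _ _)
  · intro x hx
    have hGx : ∀ v ∈ T, ∀ n : ℕ, ∃ δ, 0 < δ ∧
        f (x + δ • v) + f (x - δ • v) - 2 * f x < δ * (1 / ((n : ℝ) + 1)) := by
      intro v hv n
      exact Set.mem_iInter.mp hx (⟨v, hv⟩, n)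
    -- Step A : on T, two-sided derivative
    have hA : ∀ v ∈ T, Nf f x v + Nf f x (-v) = 0 := by
      intro v hv
      refine le_antisymm ?_ (Nf_pair_nonneg hconv x v)
      by_contra hpos
      push_neg at hpos
      obtain ⟨n, hn⟩ := exists_nat_one_div_lt hpos
      obtain ⟨δ, hδ, hlt⟩ := hGx v hv n
      have q1 : Nf f x v ≤ (f (x + δ • v) - f x) / δ := Nf_le hconv hδ
      have q2 : Nf f x (-v) ≤ (f (x - δ • v) - f x) / δ := by
        have h := Nf_le hconv (x := x) (v := -v) (t := δ) hδ
        rw [smul_neg, show x + -(δ • v) = x - δ • v by abel] at h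
        exact h
      have hsum : (f (x + δ • v) - f x) / δ + (f (x - δ • v) - f x) / δ < 1 / ((n : ℝ) + 1) := by
        rw [← add_div, div_lt_iff₀ hδ]
        linarith
      have hn' : (1 : ℝ) / ((n : ℝ) + 1) < Nf f x v + Nf f x (-v) := by
        exact_mod_cast hn
      linarith
    -- Step B : all directions
    have hB : ∀ v : E, Nf f x v + Nf f x (-v) = 0 := by
      intro v
      rcases eq_or_ne v 0 with rfl | hv
      · rw [neg_zero, Nf_zero_dir hconv]; ring
      by_contra hne
      have hpos : 0 < Nf f x v + Nf f x (-v) := (Nf_pair_nonneg hconv x v).lt_of_ne (Ne.symm hne)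
      have h1 : -Nf f x (-v) ≤ Nf f x v := by linarith [Nf_pair_nonneg hconv x v]
      obtain ⟨p₁, hp₁v, hp₁⟩ := exists_subgrad hconv hcont x hv h1 (le_refl _)
      obtain ⟨p₂, hp₂v, hp₂⟩ := exists_subgrad hconv hcont x hv (le_refl _) h1
      have hval : ∀ (p : E →L[ℝ] ℝ), (∀ w, p w ≤ Nf f x w) → ∀ w ∈ T, p w = Nf f x w := by
        intro p hp w hw
        have a1 := hp w
        have a2 := hp (-w)
        rw [map_neg] at a2
        have a3 := hA w hw
        linarith
      have hmem : ∀ (p : E →L[ℝ] ℝ), (∀ w, p w ≤ Nf f x w) →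
          StrongDual.toWeakDual p ∈ K := by
        intro p hp
        apply subset_closure
        rw [hD]
        exact sup_lt_top hconv hcont x p hp
      have heq := hsep _ _ (hmem p₁ hp₁) (hmem p₂ hp₂)
        (fun w hw => by
          show p₁ w = p₂ w
          rw [hval p₁ hp₁ w hw, hval p₂ hp₂ w hw])
      have : p₁ = p₂ := StrongDual.toWeakDual.injective heq
      rw [this, hp₂v] at hp₁v
      linarith
    -- Step C : linearity of Nf f x
    have hadd : ∀ v w, Nf f x (v + w) = Nf f x v + Nf f x w := by
      intro v w
      refine le_antisymm (Nf_add hconv x v w) ?_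
      have h1 : Nf f x v ≤ Nf f x (v + w) + Nf f x (-w) := by
        have h := Nf_add hconv x (v + w) (-w)
        rw [show v + w + -w = v by abel] at h
        exact h
      have h2 := hB w
      linarith
    have hsmul : ∀ (c : ℝ) (v : E), Nf f x (c • v) = c * Nf f x v := by
      intro c v
      rcases lt_trichotomy c 0 with hc | rfl | hc
      · rw [show c • v = (-c) • (-v) by rw [smul_neg, neg_smul, neg_neg],
          Nf_smul hconv (by linarith)]
        have hnv : Nf f x (-v) = -Nf f x v := by linarith [hB v]
        rw [hnv]; ring
      · rw [zero_smul, Nf_zero_dir hconv, zero_mul]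
      · exact Nf_smul hconv hc
    let pl : E →ₗ[ℝ] ℝ :=
      { toFun := Nf f x
        map_add' := hadd
        map_smul' := fun c v => by simpa [smul_eq_mul] using hsmul c v }
    obtain ⟨C, hC⟩ := bound_of_le_Nf hconv hcont x pl (fun w => le_refl _)
    refine ⟨pl.mkContinuousOfExistsBound ⟨C, hC⟩, ?_⟩
    intro v
    have hpv : pl.mkContinuousOfExistsBound ⟨C, hC⟩ v = Nf f x v := rfl
    rw [hpv]
    -- right limits, for every direction
    have hRight : ∀ u : E, Tendsto (fun t : ℝ => (f (x + t • u) - f x) / t)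
        (𝓝[>] 0) (𝓝 (Nf f x u)) := by
      intro u
      have hmono : MonotoneOn (fun t : ℝ => (f (x + t • u) - f x) / t) (Set.Ioi 0) := by
        intro a ha b hb hab
        simp only
        rw [← slope_line, ← slope_line]
        exact slope_mono' (line_convex hconv x u) (ne_of_gt ha) (ne_of_gt hb) hab
      have hbdd : BddBelow ((fun t : ℝ => (f (x + t • u) - f x) / t) '' Set.Ioi 0) := by
        refine ⟨Nf f x u, ?_⟩
        rintro y ⟨t, ht, rfl⟩
        exact Nf_le hconv ht
      have hinf : sInf ((fun t : ℝ => (f (x + t • u) - f x) / t) '' Set.Ioi 0) = Nf f x u := by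
        have himg : (fun t : ℝ => (f (x + t • u) - f x) / t) '' Set.Ioi 0
            = slope (lineFn f x u) 0 '' Set.Ioi 0 :=
          Set.image_congr fun t _ => (slope_line x u t).symm
        rw [himg]
        rfl
      have h := hmono.tendsto_nhdsGT hbdd
      rwa [hinf] at h
    have hneg : Tendsto (fun t : ℝ => -t) (𝓝[<] (0:ℝ)) (𝓝[>] (0:ℝ)) := by
      refine tendsto_nhdsWithin_of_tendsto_nhds_of_eventually_within _ ?_ ?_
      · have h0 : Tendsto (fun t : ℝ => -t) (𝓝 (0:ℝ)) (𝓝 (0:ℝ)) := by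
          simpa using (continuous_neg.tendsto (0:ℝ))
        exact h0.mono_left nhdsWithin_le_nhds
      · filter_upwards [self_mem_nhdsWithin] with t ht
        exact Set.mem_Ioi.mpr (neg_pos.mpr ht)
    have hleft : Tendsto (fun t : ℝ => (f (x + t • v) - f x) / t) (𝓝[<] 0) (𝓝 (Nf f x v)) := by
      have comp := (hRight (-v)).comp hneg
      have hcomp2 := comp.neg
      have heqlim : -Nf f x (-v) = Nf f x v := by linarith [hB v]
      rw [heqlim] at hcomp2
      refine hcomp2.congr fun t => ?_
      show -((f (x + (-t) • (-v)) - f x) / (-t)) = (f (x + t • v) - f x) / t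
      rw [neg_smul, smul_neg, neg_neg, div_neg, neg_neg]
    have hsplit : (𝓝[≠] (0:ℝ)) = 𝓝[<] (0:ℝ) ⊔ 𝓝[>] (0:ℝ) := by
      rw [← nhdsWithin_union, Set.Iio_union_Ioi]
    rw [hsplit]
    exact tendsto_sup.mpr ⟨hleft, hRight v⟩
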